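/- Suppose a discrete group G acts on a row-finite, finitely aligned multitree E with no sources. For any finite path α = e_1⋯e_n in the quotient graph Γ = G\E and any lift v′ ∈ E^0 of r(α), the number of lifts of α in E with range v′ equals the product ∏_{i=1}^n [G_{r(e_i)} : G_{e_i}] of the indices of the edge stabilisers in the range-vertex stabilisers. -/

import Mathlib

/-- A directed graph: vertices, edges, and range/source maps. -/
structure DirGraph where
  V : Type
  E : Type
  r : E → V
  s : E → V

namespace DirGraph

/-- `G.IsDPath v w p` : `p` is a directed path from `w` to `v`, i.e. a (possibly empty)
composable sequence of edges with range `v` and source `w`. -/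
def IsDPath (G : DirGraph) : G.V → G.V → List G.E → Prop
  | v, w, [] => v = w
  | v, w, e :: p => G.r e = v ∧ G.IsDPath (G.s e) w p

/-- The relation `v ≤ w` : there is a directed path from `w` to `v`. -/
def Le (G : DirGraph) (v w : G.V) : Prop := ∃ p, G.IsDPath v w p

/-- A multitree: there is at most one directed path between any two vertices. -/
def IsMultitree (G : DirGraph) : Prop :=
  ∀ v w p q, G.IsDPath v w p → G.IsDPath v w q → p = q

/-- Row-finite: every vertex receives finitely many edges. -/
def RowFinite (G : DirGraph) : Prop := ∀ v, {e : G.E | G.r e = v}.Finite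

/-- No sources: every vertex receives at least one edge. -/
def NoSources (G : DirGraph) : Prop := ∀ v, ∃ e, G.r e = v

/-- The set of minimal common upper bounds of `v` and `w`. -/
def mub (G : DirGraph) (v w : G.V) : Set G.V :=
  {u | G.Le v u ∧ G.Le w u ∧ ∀ u', G.Le v u' → G.Le w u' → G.Le u' u → u' = u}

/-- Finitely aligned: any two vertices have finitely many minimal common upper bounds. -/
def FinAligned (G : DirGraph) : Prop := ∀ v w, (G.mub v w).Finite

/-- Infinite (directed) paths in `G`. -/
def InfPath (G : DirGraph) := {l : ℕ → G.E // ∀ n, G.s (l n) = G.r (l (n + 1))}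

/-- Shift-tail equivalence of infinite paths. -/
def stEquiv (G : DirGraph) (a b : G.InfPath) : Prop :=
  ∃ m n : ℕ, ∀ k, a.1 (m + k) = b.1 (n + k)

/-- The boundary `∂G`: shift-tail equivalence classes of infinite paths. -/
def Bdry (G : DirGraph) := Quot G.stEquiv

/-- The cylinder set `Z_∂(v) ⊆ ∂G` of boundary classes of infinite paths with range `v`. -/
def Zb (G : DirGraph) (v : G.V) : Set G.Bdry :=
  {x | ∃ l : G.InfPath, G.r (l.1 0) = v ∧ Quot.mk G.stEquiv l = x}

/-- The cylinder-set topology on the boundary `∂G`. -/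
def bdryTop (G : DirGraph) : TopologicalSpace G.Bdry :=
  TopologicalSpace.generateFrom {S | ∃ v, S = G.Zb v}

/-- The cylinder set `Z(v) ⊆ Ω = G.V ⊕ ∂G`: vertices `w` with a path from `w` to `v`,
together with boundary classes of infinite paths through `v`. -/
def Zfull (G : DirGraph) (v : G.V) : Set (G.V ⊕ G.Bdry) :=
  {x | Sum.elim (fun w => G.Le v w) (fun b => b ∈ G.Zb v) x}

end DirGraph

namespace DirGraph

variable {Γgrp : Type} [Group Γgrp]

/-- The quotient directed graph `G\E` of a graph action: vertices and edges are the
orbits of vertices and edges. -/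
def quotGraph (Γgrp : Type) [Group Γgrp] (E : DirGraph)
    [MulAction Γgrp E.V] [MulAction Γgrp E.E]
    (hr : ∀ (g : Γgrp) (e : E.E), E.r (g • e) = g • E.r e)
    (hs : ∀ (g : Γgrp) (e : E.E), E.s (g • e) = g • E.s e) : DirGraph where
  V := Quotient (MulAction.orbitRel Γgrp E.V)
  E := Quotient (MulAction.orbitRel Γgrp E.E)
  r := Quotient.map E.r (by
    intro a b hab
    obtain ⟨g, hg⟩ := hab
    exact ⟨g, by simp only [← hr, hg]⟩)
  s := Quotient.map E.s (by
    intro a b hab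
    obtain ⟨g, hg⟩ := hab
    exact ⟨g, by simp only [← hs, hg]⟩)

/-- The induced action of a group element on infinite paths. -/
def actInf (E : DirGraph) [MulAction Γgrp E.V] [MulAction Γgrp E.E]
    (hr : ∀ (g : Γgrp) (e : E.E), E.r (g • e) = g • E.r e)
    (hs : ∀ (g : Γgrp) (e : E.E), E.s (g • e) = g • E.s e)
    (g : Γgrp) (l : E.InfPath) : E.InfPath :=
  ⟨fun n => g • l.1 n, fun n => by rw [hs, hr, l.2 n]⟩

/-- The induced action of a group element on the boundary `∂E`. -/
def actBdry (E : DirGraph) [MulAction Γgrp E.V] [MulAction Γgrp E.E]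
    (hr : ∀ (g : Γgrp) (e : E.E), E.r (g • e) = g • E.r e)
    (hs : ∀ (g : Γgrp) (e : E.E), E.s (g • e) = g • E.s e)
    (g : Γgrp) : E.Bdry → E.Bdry :=
  Quot.map (E.actInf hr hs g) (by
    rintro a b ⟨m, n, h⟩
    exact ⟨m, n, fun k => by simp only [actInf, h k]⟩)

end DirGraph


namespace DirGraph

lemma isDPath_cons (G : DirGraph) (v w : G.V) (e : G.E) (p : List G.E) :
    G.IsDPath v w (e :: p) ↔ (G.r e = v ∧ G.IsDPath (G.s e) w p) := Iff.rfl

lemma paths_finite (G : DirGraph) (hrow : G.RowFinite) (n : ℕ) :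
    ∀ v' : G.V, {p : List G.E | (∃ w, G.IsDPath v' w p) ∧ p.length = n}.Finite := by
  induction n with
  | zero =>
    intro v'
    apply Set.Finite.subset (Set.finite_singleton ([] : List G.E))
    rintro p ⟨-, hl⟩
    simp [List.length_eq_zero_iff.mp hl]
  | succ n ih =>
    intro v'
    apply Set.Finite.subset
      (Set.Finite.biUnion (hrow v') (fun e _ =>
        ((ih (G.s e)).image (fun q => e :: q))))
    rintro p ⟨⟨w, hp⟩, hl⟩
    cases p with
    | nil => simp at hl
    | cons e q =>
      obtain ⟨he, hq⟩ := hp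
      exact Set.mem_biUnion he ⟨q, ⟨⟨w, hq⟩, by simpa using hl⟩, rfl⟩

end DirGraph

section AuxCount

variable {Γgrp : Type} [Group Γgrp]

lemma edge_count (E : DirGraph) [MulAction Γgrp E.V] [MulAction Γgrp E.E]
    (hr : ∀ (g : Γgrp) (e : E.E), E.r (g • e) = g • E.r e)
    (x : E.E) (v' : E.V) (g : Γgrp) (hg : g • E.r x = v') :
    Nat.card {e : E.E // E.r e = v' ∧ e ∈ MulAction.orbit Γgrp x} =
      (MulAction.stabilizer Γgrp x).relIndex (MulAction.stabilizer Γgrp (E.r x)) := by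
  set K := MulAction.stabilizer Γgrp x with hK
  set H := MulAction.stabilizer Γgrp (E.r x) with hH
  have hf : ∀ h : H, E.r ((g * (h : Γgrp)) • x) = v' ∧ (g * (h : Γgrp)) • x ∈ MulAction.orbit Γgrp x := by
    intro h
    refine ⟨?_, ⟨g * h, rfl⟩⟩
    rw [hr, mul_smul, h.2, hg]
  let f : H ⧸ K.subgroupOf H → {e : E.E // E.r e = v' ∧ e ∈ MulAction.orbit Γgrp x} :=
    Quotient.lift (fun h : H => ⟨(g * (h : Γgrp)) • x, hf h⟩) (by
      intro h₁ h₂ hrel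
      have hk : ((h₁ : Γgrp)⁻¹ * h₂) • x = x := by
        have := (QuotientGroup.leftRel_apply).mp hrel
        exact this
      apply Subtype.ext
      show (g * (h₁ : Γgrp)) • x = (g * (h₂ : Γgrp)) • x
      calc (g * (h₁ : Γgrp)) • x = (g * (h₁ : Γgrp)) • (((h₁ : Γgrp)⁻¹ * h₂) • x) := by rw [hk]
        _ = (g * (h₂ : Γgrp)) • x := by rw [← mul_smul]; group
      )
  have hbij : Function.Bijective f := by
    constructor
    · intro a b
      induction a using Quotient.inductionOn with | h h₁ =>
      induction b using Quotient.inductionOn with | h h₂ =>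
      intro hab
      have hx : (g * (h₁ : Γgrp)) • x = (g * (h₂ : Γgrp)) • x := congrArg Subtype.val hab
      apply Quotient.sound
      have hmem : h₁⁻¹ * h₂ ∈ K.subgroupOf H := by
        show ((h₁⁻¹ * h₂ : H) : Γgrp) • x = x
        push_cast
        have := congrArg (fun y => (g * (h₁ : Γgrp))⁻¹ • y) hx
        simpa [← mul_smul, mul_assoc] using this.symm
      exact QuotientGroup.leftRel_apply.mpr hmem
    · rintro ⟨e, he, h', hh'⟩
      have hmem : (g⁻¹ * h') ∈ H := by
        show (g⁻¹ * h') • E.r x = E.r x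
        have hh'' : h' • x = e := hh'
        have : E.r (h' • x) = v' := by rw [hh'']; exact he
        rw [hr] at this
        rw [mul_smul, this, ← hg, ← mul_smul]
        simp
      refine ⟨Quotient.mk _ ⟨g⁻¹ * h', hmem⟩, ?_⟩
      apply Subtype.ext
      show (g * (g⁻¹ * h')) • x = e
      rw [← hh']
      congr 1
      group
  rw [Nat.card_congr (Equiv.ofBijective f hbij).symm]
  rfl

lemma card_sigma_const {ι : Type} {β : ι → Type} [Finite ι] [∀ i, Finite (β i)] {n : ℕ}
    (h : ∀ i, Nat.card (β i) = n) : Nat.card (Σ i, β i) = Nat.card ι * n := by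
  cases nonempty_fintype ι
  have : ∀ i, Fintype (β i) := fun i => Fintype.ofFinite _
  simp only [Nat.card_eq_fintype_card, Fintype.card_sigma]
  simp [fun i => (Nat.card_eq_fintype_card (α := β i)).symm.trans (h i), mul_comm]

end AuxCount

open DirGraph in
/-- For a finite path `α` in `Γ = G\E` and a lift `v'` of its range, the number of lifts
of `α` with range `v'` equals the product over the edges `e` of `α` of the indices
`[G_{r(e)} : G_e]` of the edge stabilisers in the range-vertex stabilisers
(computed from any chosen lifts). -/
theorem stmt13 (Γgrp : Type) [Group Γgrp] [Countable Γgrp] (E : DirGraph)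
    [Countable E.V] [Countable E.E]
    [MulAction Γgrp E.V] [MulAction Γgrp E.E]
    (hr : ∀ (g : Γgrp) (e : E.E), E.r (g • e) = g • E.r e)
    (hs : ∀ (g : Γgrp) (e : E.E), E.s (g • e) = g • E.s e)
    (hmt : E.IsMultitree) (hrow : E.RowFinite) (hnsrc : E.NoSources)
    (hfa : E.FinAligned)
    (ℓ : (quotGraph Γgrp E hr hs).E → E.E)
    (hℓ : ∀ c, (Quotient.mk (MulAction.orbitRel Γgrp E.E) (ℓ c) :
      (quotGraph Γgrp E hr hs).E) = c)
    (α : List (quotGraph Γgrp E hr hs).E) (v' : E.V)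
    (hα : ∃ w, (quotGraph Γgrp E hr hs).IsDPath
      (Quotient.mk (MulAction.orbitRel Γgrp E.V) v') w α) :
    Nat.card {p : List E.E // (∃ w, E.IsDPath v' w p) ∧
        p.map (fun e => (Quotient.mk (MulAction.orbitRel Γgrp E.E) e :
          (quotGraph Γgrp E hr hs).E)) = α} =
      (α.map (fun c => (MulAction.stabilizer Γgrp (ℓ c)).relIndex
        (MulAction.stabilizer Γgrp (E.r (ℓ c))))).prod := by
  
  classical
  induction α generalizing v' with
  | nil =>
    haveI : Unique {p : List E.E // (∃ w, E.IsDPath v' w p) ∧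
        p.map (fun e => (Quotient.mk (MulAction.orbitRel Γgrp E.E) e :
          (quotGraph Γgrp E hr hs).E)) = ([] : List (quotGraph Γgrp E hr hs).E)} := by
      refine ⟨⟨⟨[], ⟨v', rfl⟩, rfl⟩⟩, ?_⟩
      rintro ⟨p, hp, hm⟩
      have : p = [] := List.map_eq_nil_iff.mp hm
      subst this
      rfl
    exact Nat.card_unique
  | cons c α' ih =>
    obtain ⟨w₀, hw₀⟩ := hα
    obtain ⟨hc, hα'⟩ := hw₀
    rw [← hℓ c] at hc
    simp only [quotGraph, Quotient.map_mk] at hc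
    obtain ⟨g₀, hg₀⟩ := Quotient.exact hc
    have hg : g₀⁻¹ • E.r (ℓ c) = v' := by
      have hg₀' : g₀ • v' = E.r (ℓ c) := hg₀
      rw [← hg₀', ← mul_smul]; simp
    set I := {e : E.E // E.r e = v' ∧
        (Quotient.mk (MulAction.orbitRel Γgrp E.E) e : (quotGraph Γgrp E hr hs).E) = c}
      with hI
    set β := fun e : I => {p : List E.E // (∃ w, E.IsDPath (E.s e.1) w p) ∧
        p.map (fun e => (Quotient.mk (MulAction.orbitRel Γgrp E.E) e :
          (quotGraph Γgrp E hr hs).E)) = α'} with hβ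
    haveI : Finite I := by
      have hsub : {e : E.E | E.r e = v' ∧
          (Quotient.mk (MulAction.orbitRel Γgrp E.E) e : (quotGraph Γgrp E hr hs).E) = c}
          ⊆ {e : E.E | E.r e = v'} := fun e h => h.1
      exact ((hrow v').subset hsub).to_subtype
    haveI : ∀ e : I, Finite (β e) := by
      intro e
      have hsub : {p : List E.E | (∃ w, E.IsDPath (E.s e.1) w p) ∧
          p.map (fun e => (Quotient.mk (MulAction.orbitRel Γgrp E.E) e :
            (quotGraph Γgrp E hr hs).E)) = α'}
          ⊆ {p : List E.E | (∃ w, E.IsDPath (E.s e.1) w p) ∧ p.length = α'.length} := by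
        rintro p ⟨h1, h2⟩
        exact ⟨h1, by rw [← h2]; exact (List.length_map ..).symm⟩
      exact ((E.paths_finite hrow α'.length (E.s e.1)).subset hsub).to_subtype
    let F : (Σ e : I, β e) → {p : List E.E // (∃ w, E.IsDPath v' w p) ∧
        p.map (fun e => (Quotient.mk (MulAction.orbitRel Γgrp E.E) e :
          (quotGraph Γgrp E hr hs).E)) = c :: α'} := fun x =>
      ⟨x.1.1 :: x.2.1,
        ⟨Exists.choose x.2.2.1, x.1.2.1, Exists.choose_spec x.2.2.1⟩,
        by simp only [List.map_cons, x.1.2.2, x.2.2.2]; rfl⟩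
    have hbij : Function.Bijective F := by
      constructor
      · rintro ⟨⟨e, he⟩, ⟨q, hq⟩⟩ ⟨⟨e', he'⟩, ⟨q', hq'⟩⟩ hEq
        have hval : e :: q = e' :: q' := congrArg Subtype.val hEq
        obtain ⟨h1, h2⟩ := List.cons.injEq e q e' q' ▸ hval
        subst h1; subst h2; rfl
      · rintro ⟨p, hp, hm⟩
        cases p with
        | nil => simp at hm
        | cons e q =>
          obtain ⟨w, he, hq⟩ := hp
          rw [List.map_cons] at hm
          have h1 : (Quotient.mk (MulAction.orbitRel Γgrp E.E) e :
              (quotGraph Γgrp E hr hs).E) = c := (List.cons.injEq _ _ _ _ ▸ hm).1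
          have h2 : q.map (fun e => (Quotient.mk (MulAction.orbitRel Γgrp E.E) e :
              (quotGraph Γgrp E hr hs).E)) = α' := (List.cons.injEq _ _ _ _ ▸ hm).2
          exact ⟨⟨⟨e, he, h1⟩, ⟨q, ⟨w, hq⟩, h2⟩⟩, Subtype.ext rfl⟩
    have hfib : ∀ e : I, Nat.card (β e) =
        (α'.map (fun c => (MulAction.stabilizer Γgrp (ℓ c)).relIndex
          (MulAction.stabilizer Γgrp (E.r (ℓ c))))).prod := by
      intro e
      apply ih (E.s e.1)
      refine ⟨w₀, ?_⟩
      have hcs : (quotGraph Γgrp E hr hs).s c =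
          (Quotient.mk (MulAction.orbitRel Γgrp E.V) (E.s e.1) :
            (quotGraph Γgrp E hr hs).V) := by
        have h1 : (quotGraph Γgrp E hr hs).s c =
            (quotGraph Γgrp E hr hs).s (Quotient.mk (MulAction.orbitRel Γgrp E.E) e.1) :=
          congrArg _ e.2.2.symm
        have h2 : (quotGraph Γgrp E hr hs).s (Quotient.mk (MulAction.orbitRel Γgrp E.E) e.1) =
            (Quotient.mk (MulAction.orbitRel Γgrp E.V) (E.s e.1) :
              (quotGraph Γgrp E hr hs).V) := by
          simp only [quotGraph, Quotient.map_mk]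
        exact h1.trans h2
      rw [← hcs]
      exact hα'
    have hcard := (Nat.card_congr (Equiv.ofBijective F hbij)).symm
    rw [hcard, card_sigma_const hfib]
    have hIorb : Nat.card I = (MulAction.stabilizer Γgrp (ℓ c)).relIndex
        (MulAction.stabilizer Γgrp (E.r (ℓ c))) := by
      have hequiv : I ≃ {e : E.E // E.r e = v' ∧ e ∈ MulAction.orbit Γgrp (ℓ c)} := by
        apply Equiv.subtypeEquivRight
        intro e
        refine and_congr_right fun _ => ?_
        constructor
        · intro h
          have : (Quotient.mk (MulAction.orbitRel Γgrp E.E) e :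
              (quotGraph Γgrp E hr hs).E) = Quotient.mk (MulAction.orbitRel Γgrp E.E) (ℓ c) := by
            rw [h, hℓ c]
          exact Quotient.exact this
        · intro h
          rw [← hℓ c]
          exact Quotient.sound h
      rw [Nat.card_congr hequiv]
      exact edge_count E hr (ℓ c) v' g₀⁻¹ hg
    rw [hIorb, List.map_cons, List.prod_cons]
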